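/- Let p ≥ 3 be prime and B satisfy Jenkins' identity. Fix D with (D/p) = −1 and d with p² ∤ d. Then for all n ≥ 1, (−1)ⁿB(D, p^{2n}d) ≡ (−1)^{n+1}B(D, p^{2(n+1)}d) (mod pⁿ); i.e., the sequence cₙ = (−1)ⁿB(D, p^{2n}d) is a p-adic Cauchy sequence with |c_{n+1} − c_n|_p ≤ p^{−n}. -/

import Mathlib

open Finset

/-- Let `p ≥ 3` be prime and let `B` satisfy Jenkins' identity, specialized to
`(D/p) = −1`. Fix `D` with `(D/p) = −1` and `d` with `p² ∤ d`. Then for all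
`n ≥ 1`, `(−1)ⁿB(D, p^{2n}d) ≡ (−1)^{n+1}B(D, p^{2(n+1)}d) (mod pⁿ)`; i.e. the
sequence `cₙ = (−1)ⁿB(D, p^{2n}d)` is a `p`-adic Cauchy sequence with
`|c_{n+1} − c_n|_p ≤ p^{−n}`. -/
theorem jenkins_alternating_cauchy (p : ℕ) [Fact p.Prime] (hp3 : 3 ≤ p)
    (B : ℕ → ℕ → ℤ) (D d : ℕ) (hD : legendreSym p (D : ℤ) = -1) (hd2 : ¬ p ^ 2 ∣ d)
    (hJ : ∀ n : ℕ, 1 ≤ n →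
      B D (p ^ (2 * n) * d) =
        (p : ℤ) ^ n * B (p ^ (2 * n) * D) d
          - ∑ k ∈ range n, (-1 : ℤ) ^ (n - k - 1) * (p : ℤ) ^ (k + 1) *
              (if p ^ 2 ∣ d then B (p ^ (2 * k) * D) (d / p ^ 2) else 0)
          - ∑ k ∈ range n, (-1 : ℤ) ^ (n - k - 1) * (1 + legendreSym p (-(d : ℤ))) *
              (p : ℤ) ^ k * B (p ^ (2 * k) * D) d) :
    ∀ n : ℕ, 1 ≤ n →
      ((-1 : ℤ) ^ n * B D (p ^ (2 * n) * d) ≡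
          (-1 : ℤ) ^ (n + 1) * B D (p ^ (2 * (n + 1)) * d) [ZMOD (p : ℤ) ^ n]) ∧
        ‖(((-1 : ℤ) ^ (n + 1) * B D (p ^ (2 * (n + 1)) * d) : ℤ) : ℚ_[p])
            - (((-1 : ℤ) ^ n * B D (p ^ (2 * n) * d) : ℤ) : ℚ_[p])‖
          ≤ (p : ℝ) ^ (-(n : ℤ)) := by
  intro n hn
  set ε : ℤ := 1 + legendreSym p (-(d : ℤ)) with hε
  set A : ℕ → ℤ := fun k => B (p ^ (2 * k) * D) d with hA
  have h1 := hJ n hn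
  have h2 := hJ (n + 1) (by omega)
  simp only [if_neg hd2, mul_zero, Finset.sum_const_zero, sub_zero, ← hε, ← hA] at h1 h2
  -- rewrite the sum in h2
  have hsum : ∑ k ∈ range (n + 1), (-1 : ℤ) ^ (n + 1 - k - 1) * ε * (p : ℤ) ^ k * A k
      = ε * (p : ℤ) ^ n * A n
        - ∑ k ∈ range n, (-1 : ℤ) ^ (n - k - 1) * ε * (p : ℤ) ^ k * A k := by
    rw [Finset.sum_range_succ]
    have : ∀ k ∈ range n, (-1 : ℤ) ^ (n + 1 - k - 1) * ε * (p : ℤ) ^ k * A k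
        = -((-1 : ℤ) ^ (n - k - 1) * ε * (p : ℤ) ^ k * A k) := by
      intro k hk
      have hk' := Finset.mem_range.mp hk
      have hkk : n + 1 - k - 1 = (n - k - 1) + 1 := by omega
      rw [hkk, pow_succ]
      ring
    rw [Finset.sum_congr rfl this, Finset.sum_neg_distrib]
    have : n + 1 - n - 1 = 0 := by omega
    rw [this]
    ring
  rw [hsum] at h2
  have key : (-1 : ℤ) ^ (n + 1) * B D (p ^ (2 * (n + 1)) * d)
      - (-1 : ℤ) ^ n * B D (p ^ (2 * n) * d)
      = (p : ℤ) ^ n * ((-1 : ℤ) ^ (n + 1) * (p : ℤ) * A (n + 1)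
          + (-1 : ℤ) ^ n * (ε - 1) * A n) := by
    rw [h1, h2]
    ring
  have hdvd : (p : ℤ) ^ n ∣
      (-1 : ℤ) ^ (n + 1) * B D (p ^ (2 * (n + 1)) * d)
        - (-1 : ℤ) ^ n * B D (p ^ (2 * n) * d) :=
    ⟨_, key⟩
  constructor
  · exact (Int.modEq_iff_dvd.mpr (by exact_mod_cast hdvd)).symm.symm
  · have := (Padic.norm_int_le_pow_iff_dvd
      ((-1 : ℤ) ^ (n + 1) * B D (p ^ (2 * (n + 1)) * d)
        - (-1 : ℤ) ^ n * B D (p ^ (2 * n) * d)) n).mpr (by exact_mod_cast hdvd)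
    calc ‖(((-1 : ℤ) ^ (n + 1) * B D (p ^ (2 * (n + 1)) * d) : ℤ) : ℚ_[p])
            - (((-1 : ℤ) ^ n * B D (p ^ (2 * n) * d) : ℤ) : ℚ_[p])‖
        = ‖((((-1 : ℤ) ^ (n + 1) * B D (p ^ (2 * (n + 1)) * d)
            - (-1 : ℤ) ^ n * B D (p ^ (2 * n) * d) : ℤ)) : ℚ_[p])‖ := by
          push_cast; ring_nf
      _ ≤ (p : ℝ) ^ (-(n : ℤ)) := this
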